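/- Let G be the graph on n vertices obtained from the cycle C_{n−1} (n ≥ 4) by attaching a leaf, i.e., by adding one new vertex adjacent to exactly one vertex of the cycle. Then γ_gr^L(G) = n. -/

import Mathlib

/-- A list of distinct vertices `s = (v_1, …, v_k)` is an *L-sequence* of `G` if for each `i`,
`N[v_i] \ ⋃_{j<i} N(v_j) ≠ ∅`, i.e. there is a vertex `w` in the closed neighborhood of `v_i`
that lies in no open neighborhood `N(v_j)` for `j < i`. -/
def IsLSeq {V : Type*} (G : SimpleGraph V) (s : List V) : Prop :=
  s.Nodup ∧ ∀ i : Fin s.length, ∃ w : V,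
    (w = s.get i ∨ G.Adj (s.get i) w) ∧
    ∀ j : Fin s.length, j < i → ¬ G.Adj (s.get j) w

/-- The L-Grundy domination number of `G`: the maximum length of an L-sequence of `G`. -/
noncomputable def LGrundy {V : Type*} [Fintype V] (G : SimpleGraph V) : ℕ :=
  sSup {k : ℕ | ∃ s : List V, IsLSeq G s ∧ s.length = k}

/-- The graph obtained from the cycle `C_m` by attaching one new vertex (a leaf) adjacent to
exactly one vertex of the cycle. -/
def cycleWithLeaf (m : ℕ) : SimpleGraph (Fin m ⊕ Unit) :=
  SimpleGraph.fromRel (fun a b =>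
    match a, b with
    | Sum.inl i, Sum.inl j => (SimpleGraph.cycleGraph m).Adj i j
    | Sum.inl i, Sum.inr _ => i.val = 0
    | _, _ => False)

lemma mod_eq_one_iff' {x m : ℕ} (hm : 3 ≤ m) (hx : x < 2 * m) :
    x % m = 1 ↔ (x = 1 ∨ x = m + 1) := by
  rcases lt_or_ge x m with h | h
  · rw [Nat.mod_eq_of_lt h]; omega
  · have h2 : x % m = x - m := by
      rw [Nat.mod_eq_sub_mod h, Nat.mod_eq_of_lt (by omega)]
    rw [h2]; omega

lemma cwl_adj_inl_inl {m : ℕ} (hm : 3 ≤ m) {a b : ℕ} (ha : a < m) (hb : b < m) :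
    (cycleWithLeaf m).Adj (Sum.inl ⟨a, ha⟩) (Sum.inl ⟨b, hb⟩) ↔
      (a + 1 = b ∨ b + 1 = a ∨ (a = 0 ∧ b = m - 1) ∨ (b = 0 ∧ a = m - 1)) := by
  have hsym : ∀ u v : Fin m, (SimpleGraph.cycleGraph m).Adj u v ↔
      ((u - v).val = 1 ∨ (v - u).val = 1) := fun u v => SimpleGraph.cycleGraph_adj'
  simp only [cycleWithLeaf, SimpleGraph.fromRel_adj, ne_eq, Sum.inl.injEq, hsym,
    Fin.sub_def, Fin.mk.injEq]
  rw [mod_eq_one_iff' hm (by omega), mod_eq_one_iff' hm (by omega)]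
  omega

lemma cwl_adj_inl_inr {m : ℕ} {a : ℕ} (ha : a < m) {x : Unit} :
    (cycleWithLeaf m).Adj (Sum.inl ⟨a, ha⟩) (Sum.inr x) ↔ a = 0 := by
  simp only [cycleWithLeaf, SimpleGraph.fromRel_adj]
  constructor
  · rintro ⟨-, h | h⟩
    · exact h
    · exact h.elim
  · intro h; exact ⟨by simp, Or.inl h⟩

lemma cwl_adj_inr_inr {m : ℕ} {x y : Unit} :
    ¬ (cycleWithLeaf m).Adj (Sum.inr x) (Sum.inr y) := by
  simp [cycleWithLeaf, SimpleGraph.fromRel_adj]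

/-- value of the `i`-th vertex of the L-sequence (cycle part). -/
def lval (m i : ℕ) : ℕ :=
  if i < m - 3 then i + 1 else if i = m - 3 then m - 1 else if i = m - 2 then m - 2 else 0

lemma lval_lt {m : ℕ} (hm : 3 ≤ m) (i : ℕ) : lval m i < m := by
  unfold lval; split_ifs <;> omega

/-- the `i`-th vertex of the L-sequence. -/
def lseqF (m : ℕ) (hm : 3 ≤ m) (i : ℕ) : Fin m ⊕ Unit :=
  if i = m - 1 then Sum.inr () else Sum.inl ⟨lval m i, lval_lt hm i⟩

/-- witness value -/
def wval (m i : ℕ) : ℕ := if i < m - 3 then i + 2 else m - 1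

lemma wval_lt {m : ℕ} (hm : 3 ≤ m) (i : ℕ) : wval m i < m := by
  unfold wval; split_ifs <;> omega

/-- the witness for position `i`. -/
def lwF (m : ℕ) (hm : 3 ≤ m) (i : ℕ) : Fin m ⊕ Unit :=
  if i ≤ m - 2 then Sum.inl ⟨wval m i, wval_lt hm i⟩ else Sum.inr ()

lemma lseqF_eq_inr {m : ℕ} (hm : 3 ≤ m) {i : ℕ} (h : i = m - 1) :
    lseqF m hm i = Sum.inr () := by unfold lseqF; rw [if_pos h]

lemma lseqF_eq_inl {m : ℕ} (hm : 3 ≤ m) {i : ℕ} (h : ¬ i = m - 1) :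
    lseqF m hm i = Sum.inl ⟨lval m i, lval_lt hm i⟩ := by unfold lseqF; rw [if_neg h]

lemma lwF_eq_inl {m : ℕ} (hm : 3 ≤ m) {i : ℕ} (h : i ≤ m - 2) :
    lwF m hm i = Sum.inl ⟨wval m i, wval_lt hm i⟩ := by unfold lwF; rw [if_pos h]

lemma lwF_eq_inr {m : ℕ} (hm : 3 ≤ m) {i : ℕ} (h : ¬ i ≤ m - 2) :
    lwF m hm i = Sum.inr () := by unfold lwF; rw [if_neg h]

lemma lseq_isLSeq (m : ℕ) (hm : 3 ≤ m) :
    IsLSeq (cycleWithLeaf m) ((List.range (m + 1)).map (lseqF m hm)) := by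
  have hlen : ((List.range (m + 1)).map (lseqF m hm)).length = m + 1 := by simp
  constructor
  · refine List.Nodup.map_on ?_ List.nodup_range
    intro x hx y hy hxy
    simp only [List.mem_range] at hx hy
    by_cases h1 : x = m - 1 <;> by_cases h2 : y = m - 1
    · omega
    · rw [lseqF_eq_inr hm h1, lseqF_eq_inl hm h2] at hxy
      exact absurd hxy (by simp)
    · rw [lseqF_eq_inl hm h1, lseqF_eq_inr hm h2] at hxy
      exact absurd hxy (by simp)
    · rw [lseqF_eq_inl hm h1, lseqF_eq_inl hm h2] at hxy
      simp only [Sum.inl.injEq, Fin.mk.injEq] at hxy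
      unfold lval at hxy
      split_ifs at hxy <;> omega
  · intro i
    have hget : ∀ j : Fin ((List.range (m + 1)).map (lseqF m hm)).length,
        ((List.range (m + 1)).map (lseqF m hm)).get j = lseqF m hm j.val := by
      intro j
      simp [List.get_eq_getElem]
    have hi : (i : ℕ) < m + 1 := by simpa using i.isLt
    refine ⟨lwF m hm i.val, ?_, ?_⟩
    · rw [hget]
      by_cases h1 : (i : ℕ) = m - 1
      · rw [lseqF_eq_inr hm h1, lwF_eq_inr hm (by omega)]
        exact Or.inl rfl
      · rw [lseqF_eq_inl hm h1]
        by_cases h2 : (i : ℕ) ≤ m - 2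
        · rw [lwF_eq_inl hm h2, cwl_adj_inl_inl hm]
          simp only [Sum.inl.injEq, Fin.mk.injEq]
          unfold lval wval
          split_ifs <;> omega
        · rw [lwF_eq_inr hm h2]
          right
          rw [cwl_adj_inl_inr]
          unfold lval
          split_ifs <;> omega
    · intro j hj
      rw [hget]
      have hj2 : (j : ℕ) < m + 1 := by simpa using j.isLt
      have hji : (j : ℕ) < (i : ℕ) := hj
      by_cases h1 : (j : ℕ) = m - 1
      · rw [lseqF_eq_inr hm h1, lwF_eq_inr hm (by omega)]
        exact cwl_adj_inr_inr
      · rw [lseqF_eq_inl hm h1]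
        by_cases h2 : (i : ℕ) ≤ m - 2
        · rw [lwF_eq_inl hm h2, cwl_adj_inl_inl hm]
          unfold lval wval
          split_ifs <;> (try simp only [false_and, and_false, or_false, false_or, not_false_iff]) <;> omega
        · rw [lwF_eq_inr hm h2, cwl_adj_inl_inr]
          unfold lval
          split_ifs <;> (try simp only [false_and, and_false, or_false, false_or, not_false_iff]) <;> omega

/-- If `G` is the graph on `n = m + 1 ≥ 4` vertices obtained from the cycle
`C_m` by attaching a leaf, then `γ_gr^L(G) = n`. -/
theorem lgrundy_cycleWithLeaf (m : ℕ) (hm : 3 ≤ m) :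
    Fintype.card (Fin m ⊕ Unit) = m + 1 ∧ LGrundy (cycleWithLeaf m) = m + 1 := by
  have hcard : Fintype.card (Fin m ⊕ Unit) = m + 1 := by simp
  refine ⟨hcard, ?_⟩
  have hmem : m + 1 ∈ {k : ℕ | ∃ s : List (Fin m ⊕ Unit),
      IsLSeq (cycleWithLeaf m) s ∧ s.length = k} :=
    ⟨_, lseq_isLSeq m hm, by simp⟩
  have hub : ∀ k ∈ {k : ℕ | ∃ s : List (Fin m ⊕ Unit),
      IsLSeq (cycleWithLeaf m) s ∧ s.length = k}, k ≤ m + 1 := by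
    rintro k ⟨s, ⟨hnd, -⟩, rfl⟩
    calc s.length ≤ Fintype.card (Fin m ⊕ Unit) := hnd.length_le_card
    _ = m + 1 := hcard
  exact le_antisymm (csSup_le ⟨_, hmem⟩ hub) (le_csSup ⟨m + 1, hub⟩ hmem)
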